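/- Let n ≥ 3 and let a, b, c ∈ ℂ with |b| ≠ |c|. Then the tridiagonal Toeplitz matrix T_n(a, b, c) is unitarily irreducible. -/

import Mathlib

open Matrix Complex

noncomputable section

/-- The `n×n` tridiagonal Toeplitz matrix `T_n(a,b,c)` with diagonal `a`, first
superdiagonal `b`, and first subdiagonal `c`. -/
def triToeplitz (n : ℕ) (a b c : ℂ) : Matrix (Fin n) (Fin n) ℂ :=
  Matrix.of fun j k =>
    if (j : ℕ) = (k : ℕ) then a
    else if (k : ℕ) = (j : ℕ) + 1 then b
    else if (j : ℕ) = (k : ℕ) + 1 then c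
    else 0

/-- `A` is unitarily irreducible: no nontrivial proper subspace is invariant under
both `A` and `A*`. -/
def UnitarilyIrreducible {n : ℕ} (A : Matrix (Fin n) (Fin n) ℂ) : Prop :=
  ¬ ∃ L : Submodule ℂ (Fin n → ℂ), 0 < Module.finrank ℂ L ∧ Module.finrank ℂ L < n ∧
      (∀ x ∈ L, A.mulVec x ∈ L) ∧ (∀ x ∈ L, Aᴴ.mulVec x ∈ L)

def extv (n : ℕ) (x : Fin n → ℂ) (m : ℕ) : ℂ := if h : m < n then x ⟨m, h⟩ else 0

def mv (n : ℕ) (a b c : ℂ) (y : ℕ → ℂ) (m : ℕ) : ℂ :=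
  if m < n then a * y m + b * y (m + 1) + (if 0 < m then c * y (m - 1) else 0) else 0

lemma extv_mulVec (n : ℕ) (a b c : ℂ) (x : Fin n → ℂ) (m : ℕ) :
    extv n ((triToeplitz n a b c).mulVec x) m = mv n a b c (extv n x) m := by
  unfold extv mv
  rcases Nat.lt_or_ge m n with h | h
  · rw [dif_pos h, if_pos h]
    rw [Matrix.mulVec, dotProduct]
    have key : ∀ k : Fin n, triToeplitz n a b c ⟨m, h⟩ k * x k
        = (if k = ⟨m, h⟩ then a * x k else 0)
        + (if h' : m + 1 < n then (if k = ⟨m + 1, h'⟩ then b * x k else 0) else 0)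
        + (if 0 < m then (if h' : m - 1 < n then (if k = ⟨m - 1, h'⟩ then c * x k else 0) else 0) else 0) := by
      intro k
      have hk := k.2
      unfold triToeplitz
      simp only [of_apply, Fin.ext_iff]
      split_ifs <;> (try (exfalso; omega)) <;> ring
    have S1 : (∑ k : Fin n, if k = ⟨m, h⟩ then a * x k else 0) = a * x ⟨m, h⟩ := by
      rw [Finset.sum_ite_eq' Finset.univ]; simp
    have S2 : (∑ k : Fin n, if h' : m + 1 < n then (if k = ⟨m + 1, h'⟩ then b * x k else 0) else 0)
        = b * (if h' : m + 1 < n then x ⟨m + 1, h'⟩ else 0) := by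
      by_cases h' : m + 1 < n
      · simp only [dif_pos h']
        rw [Finset.sum_ite_eq' Finset.univ]; simp
      · simp only [dif_neg h']; simp
    have S3 : (∑ k : Fin n, if 0 < m then (if h' : m - 1 < n then (if k = ⟨m - 1, h'⟩ then c * x k else 0) else 0) else 0)
        = (if 0 < m then c * (if h' : m - 1 < n then x ⟨m - 1, h'⟩ else 0) else 0) := by
      by_cases h0 : 0 < m
      · have h' : m - 1 < n := by omega
        simp only [if_pos h0, dif_pos h']
        rw [Finset.sum_ite_eq' Finset.univ]; simp
      · simp [h0]
    simp only [key, Finset.sum_add_distrib]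
    rw [S1, S2, S3]
    rw [dif_pos h]
  · rw [dif_neg (by omega), if_neg (by omega)]

lemma mv_comm (n : ℕ) (hn : 3 ≤ n) (a b c a' b' c' : ℂ) (y : ℕ → ℂ)
    (hy : ∀ m, n ≤ m → y m = 0) (m : ℕ) :
    mv n a b c (mv n a' b' c' y) m - mv n a' b' c' (mv n a b c y) m
      = (b * c' - c * b') * (if m = 0 then y 0 else if m + 1 = n then -(y m) else 0) := by
  rcases Nat.lt_or_ge m n with hm | hm
  · by_cases h0 : m = 0
    · subst h0
      have t0 : 0 < n := by omega
      have t1 : 1 < n := by omega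
      simp only [mv, t0, t1, if_true, lt_irrefl, if_false, Nat.zero_lt_one, zero_add,
        Nat.add_sub_cancel, if_pos rfl]
      ring
    · by_cases h1 : m + 1 = n
      · have h2 : 2 ≤ m := by omega
        have t0 : ¬ m + 1 < n := by omega
        have t0' : ¬ 1 + m < n := by omega
        have t1 : m - 1 < n := by omega
        have t2 : 0 < m := by omega
        have t3 : 0 < m - 1 := by omega
        have e1 : m - 1 + 1 = m := by omega
        have hyn : y (m + 1) = 0 := hy (m + 1) (by omega)
        have hyn' : y (1 + m) = 0 := by rw [Nat.add_comm]; exact hyn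
        simp only [mv, hm, t0, t0', t1, t2, t3, e1, hyn, hyn', if_true, if_false, if_neg h0,
          if_pos h1, mul_zero, add_zero]
        ring
      · have hm1 : m + 1 < n := by omega
        have hm1' : 1 + m < n := by omega
        have t1 : m - 1 < n := by omega
        have t2 : 0 < m := by omega
        have t4 : 0 < m + 1 := by omega
        have t4' : 0 < 1 + m := by omega
        have e1 : m - 1 + 1 = m := by omega
        have e2 : m + 1 - 1 = m := by omega
        have e2' : 1 + m - 1 = m := by omega
        simp only [mv, hm, hm1, hm1', t1, t2, t4, t4', e1, e2, e2', if_true, if_false,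
          if_neg h0, if_neg h1]
        by_cases h2 : 0 < m - 1
        · simp only [if_pos h2]; ring
        · simp only [if_neg h2]; ring
  · have t0 : ¬ m < n := by omega
    have t1 : ¬ m = 0 := by omega
    have t2 : ¬ m + 1 = n := by omega
    simp only [mv, t0, t1, t2, if_false]
    ring

lemma extv_zero' (n : ℕ) (x : Fin n → ℂ) (m : ℕ) (hm : n ≤ m) : extv n x m = 0 := by
  unfold extv; rw [dif_neg (by omega)]

lemma extv_fin (n : ℕ) (u : Fin n → ℂ) (j : Fin n) : extv n u (j : ℕ) = u j := by
  unfold extv; rw [dif_pos j.2]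

lemma extv_sub (n : ℕ) (u v : Fin n → ℂ) (m : ℕ) :
    extv n (u - v) m = extv n u m - extv n v m := by
  unfold extv; split_ifs <;> simp

lemma triToeplitz_conjTranspose (n : ℕ) (a b c : ℂ) :
    (triToeplitz n a b c)ᴴ
      = triToeplitz n (starRingEnd ℂ a) (starRingEnd ℂ c) (starRingEnd ℂ b) := by
  ext j k
  simp only [conjTranspose_apply, triToeplitz, of_apply]
  split_ifs <;> (try (exfalso; omega)) <;> simp

lemma comm_extv (n : ℕ) (hn : 3 ≤ n) (a b c : ℂ) (x : Fin n → ℂ) (m : ℕ) :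
    extv n ((triToeplitz n a b c).mulVec
        ((triToeplitz n (starRingEnd ℂ a) (starRingEnd ℂ c) (starRingEnd ℂ b)).mulVec x)
      - (triToeplitz n (starRingEnd ℂ a) (starRingEnd ℂ c) (starRingEnd ℂ b)).mulVec
        ((triToeplitz n a b c).mulVec x)) m
    = (b * starRingEnd ℂ b - c * starRingEnd ℂ c)
        * (if m = 0 then extv n x 0 else if m + 1 = n then -(extv n x m) else 0) := by
  rw [extv_sub, extv_mulVec, extv_mulVec]
  rw [show extv n ((triToeplitz n (starRingEnd ℂ a) (starRingEnd ℂ c) (starRingEnd ℂ b)).mulVec x)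
      = mv n (starRingEnd ℂ a) (starRingEnd ℂ c) (starRingEnd ℂ b) (extv n x) from
    funext (extv_mulVec n _ _ _ x)]
  rw [show extv n ((triToeplitz n a b c).mulVec x) = mv n a b c (extv n x) from
    funext (extv_mulVec n a b c x)]
  exact mv_comm n hn a b c (starRingEnd ℂ a) (starRingEnd ℂ c) (starRingEnd ℂ b) (extv n x)
    (fun m hm => extv_zero' n x m hm) m

lemma proj_mem (n : ℕ) (hn : 3 ≤ n) (a b c : ℂ) (L : Submodule ℂ (Fin n → ℂ))
    (hA : ∀ x ∈ L, (triToeplitz n a b c).mulVec x ∈ L)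
    (hB : ∀ x ∈ L,
      (triToeplitz n (starRingEnd ℂ a) (starRingEnd ℂ c) (starRingEnd ℂ b)).mulVec x ∈ L)
    (x : Fin n → ℂ) (hx : x ∈ L) :
    (fun j : Fin n => if (j : ℕ) = 0 then
      2 * (b * starRingEnd ℂ b - c * starRingEnd ℂ c) ^ 2 * x ⟨0, by omega⟩ else 0) ∈ L := by
  have hn0 : 0 < n := by omega
  set P := triToeplitz n a b c with hP
  set Q := triToeplitz n (starRingEnd ℂ a) (starRingEnd ℂ c) (starRingEnd ℂ b) with hQ
  set d := b * starRingEnd ℂ b - c * starRingEnd ℂ c with hd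
  set w1 := P.mulVec (Q.mulVec x) - Q.mulVec (P.mulVec x) with hw1def
  have hw1 : w1 ∈ L := L.sub_mem (hA _ (hB _ hx)) (hB _ (hA _ hx))
  set w2 := P.mulVec (Q.mulVec w1) - Q.mulVec (P.mulVec w1) with hw2def
  have hw2 : w2 ∈ L := L.sub_mem (hA _ (hB _ hw1)) (hB _ (hA _ hw1))
  have hmem : d • w1 + w2 ∈ L := L.add_mem (L.smul_mem d hw1) hw2
  have e1 : ∀ m : ℕ, extv n w1 m
      = d * (if m = 0 then extv n x 0 else if m + 1 = n then -(extv n x m) else 0) :=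
    fun m => comm_extv n hn a b c x m
  have e2 : ∀ m : ℕ, extv n w2 m
      = d * (if m = 0 then extv n w1 0 else if m + 1 = n then -(extv n w1 m) else 0) :=
    fun m => comm_extv n hn a b c w1 m
  have key : d • w1 + w2
      = fun j : Fin n => if (j : ℕ) = 0 then 2 * d ^ 2 * x ⟨0, by omega⟩ else 0 := by
    funext j
    have hj := j.2
    have v1 : w1 j = d * (if (j:ℕ) = 0 then extv n x 0 else if (j:ℕ) + 1 = n then -(extv n x (j:ℕ)) else 0) := by
      rw [← extv_fin n w1 j]; exact e1 (j:ℕ)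
    have v2 : w2 j = d * (if (j:ℕ) = 0 then extv n w1 0 else if (j:ℕ) + 1 = n then -(extv n w1 (j:ℕ)) else 0) := by
      rw [← extv_fin n w2 j]; exact e2 (j:ℕ)
    simp only [Pi.add_apply, Pi.smul_apply, smul_eq_mul, v1, v2]
    by_cases hj0 : (j : ℕ) = 0
    · rw [if_pos hj0, if_pos hj0, if_pos hj0]
      rw [e1 0, if_pos rfl]
      have : extv n x 0 = x ⟨0, hn0⟩ := by unfold extv; rw [dif_pos hn0]
      rw [this]
      ring
    · rw [if_neg hj0, if_neg hj0, if_neg hj0]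
      by_cases hj1 : (j : ℕ) + 1 = n
      · rw [if_pos hj1, if_pos hj1]
        rw [e1 (j:ℕ), if_neg hj0, if_pos hj1]
        ring
      · rw [if_neg hj1, if_neg hj1]
        ring
  rw [← key]
  exact hmem

lemma span_step (n : ℕ) (p q r : ℂ) (hr : r ≠ 0) (L : Submodule ℂ (Fin n → ℂ))
    (hM : ∀ x ∈ L, (triToeplitz n p q r).mulVec x ∈ L) (k : ℕ) (hk : k + 1 < n)
    (hSk : (fun j : Fin n => if (j : ℕ) = k then (1:ℂ) else 0) ∈ L)
    (hSk' : 0 < k → (fun j : Fin n => if (j : ℕ) = k - 1 then (1:ℂ) else 0) ∈ L) :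
    (fun j : Fin n => if (j : ℕ) = k + 1 then (1:ℂ) else 0) ∈ L := by
  have hES : extv n (fun j : Fin n => if (j : ℕ) = k then (1:ℂ) else 0)
      = fun m => if m = k then (1:ℂ) else 0 := by
    funext m
    unfold extv
    by_cases h : m < n
    · rw [dif_pos h]
    · rw [dif_neg h]
      rw [if_neg (by omega)]
  have hmem : (triToeplitz n p q r).mulVec (fun j : Fin n => if (j : ℕ) = k then (1:ℂ) else 0) ∈ L :=
    hM _ hSk
  have hprev : (if 0 < k then (fun j : Fin n => if (j : ℕ) = k - 1 then (1:ℂ) else 0) else (0 : Fin n → ℂ)) ∈ L := by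
    split_ifs with h
    · exact hSk' h
    · exact L.zero_mem
  have hu : (triToeplitz n p q r).mulVec (fun j : Fin n => if (j : ℕ) = k then (1:ℂ) else 0)
      - p • (fun j : Fin n => if (j : ℕ) = k then (1:ℂ) else 0)
      - q • (if 0 < k then (fun j : Fin n => if (j : ℕ) = k - 1 then (1:ℂ) else 0) else (0 : Fin n → ℂ))
      = r • (fun j : Fin n => if (j : ℕ) = k + 1 then (1:ℂ) else 0) := by
    funext j
    have hj := j.2
    have e1 : (triToeplitz n p q r).mulVec (fun j : Fin n => if (j : ℕ) = k then (1:ℂ) else 0) j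
        = mv n p q r (extv n (fun j : Fin n => if (j : ℕ) = k then (1:ℂ) else 0)) (j : ℕ) := by
      rw [← extv_mulVec]; exact (extv_fin n _ j).symm
    simp only [Pi.sub_apply, Pi.smul_apply, smul_eq_mul, e1, hES, mv,
      apply_ite (fun f : Fin n → ℂ => f j), Pi.zero_apply]
    rw [if_pos hj]
    split_ifs <;> (try (exfalso; omega)) <;> ring
  have : r • (fun j : Fin n => if (j : ℕ) = k + 1 then (1:ℂ) else 0) ∈ L := by
    rw [← hu]
    exact L.sub_mem (L.sub_mem hmem (L.smul_mem p hSk)) (L.smul_mem q hprev)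
  have h2 := L.smul_mem r⁻¹ this
  rwa [smul_smul, inv_mul_cancel₀ hr, one_smul] at h2

/-- For `n ≥ 3` and `|b| ≠ |c|`, the tridiagonal Toeplitz matrix `T_n(a,b,c)` is
unitarily irreducible. -/
theorem triToeplitz_unitarilyIrreducible {n : ℕ} (hn : 3 ≤ n) (a b c : ℂ)
    (hbc : ‖b‖ ≠ ‖c‖) :
    UnitarilyIrreducible (triToeplitz n a b c) := by
  rintro ⟨L, h1, h2, hA, hB⟩
  have hn0 : 0 < n := by omega
  have hB' : ∀ x ∈ L,
      (triToeplitz n (starRingEnd ℂ a) (starRingEnd ℂ c) (starRingEnd ℂ b)).mulVec x ∈ L := by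
    intro x hx
    have := hB x hx
    rwa [triToeplitz_conjTranspose] at this
  have hdne : b * starRingEnd ℂ b - c * starRingEnd ℂ c ≠ 0 := by
    rw [Complex.mul_conj, Complex.mul_conj]
    intro h
    apply hbc
    have hsq : Complex.normSq b = Complex.normSq c := by
      have := sub_eq_zero.mp h
      exact_mod_cast this
    rw [Complex.norm_def, Complex.norm_def, hsq]
  by_cases hex : ∃ x ∈ L, x ⟨0, hn0⟩ ≠ 0
  · -- some vector has nonzero first coordinate; show L = ⊤
    obtain ⟨x, hx, hx0⟩ := hex
    have hv := proj_mem n hn a b c L hA hB' x hx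
    have ht : 2 * (b * starRingEnd ℂ b - c * starRingEnd ℂ c) ^ 2 * x ⟨0, by omega⟩ ≠ 0 :=
      mul_ne_zero (mul_ne_zero two_ne_zero (pow_ne_zero 2 hdne)) hx0
    have hS0 : (fun j : Fin n => if (j : ℕ) = 0 then (1:ℂ) else 0) ∈ L := by
      have hsm := L.smul_mem (2 * (b * starRingEnd ℂ b - c * starRingEnd ℂ c) ^ 2 * x ⟨0, by omega⟩)⁻¹ hv
      have heq : (2 * (b * starRingEnd ℂ b - c * starRingEnd ℂ c) ^ 2 * x ⟨0, by omega⟩)⁻¹ •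
          (fun j : Fin n => if (j : ℕ) = 0 then
            2 * (b * starRingEnd ℂ b - c * starRingEnd ℂ c) ^ 2 * x ⟨0, by omega⟩ else (0:ℂ))
          = fun j : Fin n => if (j : ℕ) = 0 then (1:ℂ) else 0 := by
        funext j
        simp only [Pi.smul_apply, smul_eq_mul]
        split_ifs
        · exact inv_mul_cancel₀ ht
        · ring
      rwa [heq] at hsm
    have claim : ∀ k, k < n → (fun j : Fin n => if (j : ℕ) = k then (1:ℂ) else 0) ∈ L := by
      intro k
      induction k using Nat.strong_induction_on with
      | _ k ih =>
        intro hk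
        cases k with
        | zero => exact hS0
        | succ k' =>
          by_cases hc : c = 0
          · have hb : b ≠ 0 := fun h => hbc (by rw [h, hc])
            exact span_step n (starRingEnd ℂ a) (starRingEnd ℂ c) (starRingEnd ℂ b)
              (by simpa using hb) L hB' k' hk (ih k' (by omega) (by omega))
              (fun _ => ih (k' - 1) (by omega) (by omega))
          · exact span_step n a b c hc L hA k' hk (ih k' (by omega) (by omega))
              (fun _ => ih (k' - 1) (by omega) (by omega))
    have hLtop : L = ⊤ := by
      rw [Submodule.eq_top_iff']
      intro y
      have hy : y = ∑ i : Fin n, y i • (fun j : Fin n => if (j : ℕ) = (i : ℕ) then (1:ℂ) else 0) := by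
        funext j
        rw [Finset.sum_apply]
        simp only [Pi.smul_apply, smul_eq_mul]
        have : ∀ i : Fin n, (y i * if (j : ℕ) = (i : ℕ) then (1:ℂ) else 0)
            = if i = j then y i else 0 := by
          intro i
          by_cases h : i = j
          · rw [if_pos h, if_pos (by rw [h]), mul_one]
          · rw [if_neg h, if_neg (fun hh => h (Fin.ext hh.symm)), mul_zero]
        rw [Finset.sum_congr rfl (fun i _ => this i), Finset.sum_ite_eq' Finset.univ]
        simp
      rw [hy]
      exact Submodule.sum_mem L (fun i _ => L.smul_mem _ (claim (i : ℕ) i.2))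
    rw [hLtop] at h2
    rw [finrank_top] at h2
    simp [Module.finrank_pi] at h2
  · -- all vectors in L vanish at coordinate 0; show L = ⊥
    push_neg at hex
    have claim : ∀ k, ∀ hk : k < n, ∀ x ∈ L, x ⟨k, hk⟩ = 0 := by
      intro k
      induction k using Nat.strong_induction_on with
      | _ k ih =>
        intro hk x hx
        cases k with
        | zero => exact hex x hx
        | succ k' =>
          have hk' : k' < n := by omega
          have hAx := hA x hx
          have hBx := hB' x hx
          have hAv : mv n a b c (extv n x) k' = 0 := by
            rw [← extv_mulVec]
            unfold extv
            rw [dif_pos hk']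
            exact ih k' (by omega) hk' _ hAx
          have hBv : mv n (starRingEnd ℂ a) (starRingEnd ℂ c) (starRingEnd ℂ b) (extv n x) k' = 0 := by
            rw [← extv_mulVec]
            unfold extv
            rw [dif_pos hk']
            exact ih k' (by omega) hk' _ hBx
          have z0 : extv n x k' = 0 := by
            unfold extv; rw [dif_pos hk']; exact ih k' (by omega) hk' x hx
          have z2 : extv n x (k' + 1) = x ⟨k' + 1, hk⟩ := by
            unfold extv; rw [dif_pos hk]
          unfold mv at hAv hBv
          rw [if_pos hk', z0, z2] at hAv hBv
          have hz1 : (if 0 < k' then c * extv n x (k' - 1) else 0) = 0 := by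
            by_cases h : 0 < k'
            · rw [if_pos h]
              have : extv n x (k' - 1) = 0 := by
                unfold extv; rw [dif_pos (by omega)]
                exact ih (k' - 1) (by omega) (by omega) x hx
              rw [this, mul_zero]
            · rw [if_neg h]
          have hz1' : (if 0 < k' then (starRingEnd ℂ b) * extv n x (k' - 1) else 0) = 0 := by
            by_cases h : 0 < k'
            · rw [if_pos h]
              have : extv n x (k' - 1) = 0 := by
                unfold extv; rw [dif_pos (by omega)]
                exact ih (k' - 1) (by omega) (by omega) x hx
              rw [this, mul_zero]
            · rw [if_neg h]
          rw [hz1] at hAv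
          rw [hz1'] at hBv
          have hAv' : b * x ⟨k' + 1, hk⟩ = 0 := by linear_combination hAv
          have hBv' : (starRingEnd ℂ c) * x ⟨k' + 1, hk⟩ = 0 := by linear_combination hBv
          rcases (show b ≠ 0 ∨ c ≠ 0 by
            by_contra h
            push_neg at h
            exact hbc (by rw [h.1, h.2])) with hb | hc
          · exact (mul_eq_zero.mp hAv').resolve_left hb
          · have hc' : starRingEnd ℂ c ≠ 0 := by simpa using hc
            exact (mul_eq_zero.mp hBv').resolve_left hc'
    have hLbot : L = ⊥ := by
      rw [Submodule.eq_bot_iff]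
      intro x hx
      funext j
      have := claim (j : ℕ) j.2 x hx
      simpa using this
    rw [hLbot] at h1
    simp at h1
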